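/- arXiv:1606.04620 — 2 statements merged into one kernel-verified Lean document; each statement's English description precedes it below -/
import Mathlib

section
/- Let Ω ⊆ ℝⁿ (n ≥ 2) be a nonempty, open, bounded set and let G ⊆ Ω be Lebesgue-measurable with P_Ω(G) < ∞. Let ξ_k ↘ 0 and let φ_k : Ω → ℝ (k = 1, 2, …) be continuously differentiable with x ↦ |∇φ_k(x)|² and x ↦ W(φ_k(x)) Lebesgue integrable on Ω. Assume φ_k → χ_G almost everywhere in Ω and ∫_Ω [(ξ_k/2)|∇φ_k|² + W(φ_k)/ξ_k] dx → P_Ω(G) as k → ∞. Then the discrepancy satisfies ∫_Ω | (ξ_k/2)|∇φ_k|² − W(φ_k)/ξ_k | dx → 0 as k → ∞ (asymptotic equi-partition of energy). -/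
open MeasureTheory Filter Topology RealInnerProductSpace

/-- The quartic double-well potential `W(s) = 18 s² (1-s)²`. -/
noncomputable def W (s : ℝ) : ℝ := 18 * s ^ 2 * (1 - s) ^ 2

/-- Divergence of a vector field on `ℝⁿ`. -/
noncomputable def vdiv {n : ℕ} (g : EuclideanSpace ℝ (Fin n) → EuclideanSpace ℝ (Fin n))
    (x : EuclideanSpace ℝ (Fin n)) : ℝ :=
  ∑ i, fderiv ℝ g x (EuclideanSpace.single i 1) i

/-- The set of numbers `∫_G div g` over admissible test vector fields `g` (C¹, compactly
supported in `Ω`, with `|g| ≤ 1`), whose supremum is the perimeter of `G` in `Ω`. -/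
noncomputable def perimSet {n : ℕ} (Ω G : Set (EuclideanSpace ℝ (Fin n))) : Set ℝ :=
  { r | ∃ g : EuclideanSpace ℝ (Fin n) → EuclideanSpace ℝ (Fin n),
      ContDiff ℝ 1 g ∧ HasCompactSupport g ∧ tsupport g ⊆ Ω ∧
      (∀ x, ‖g x‖ ≤ 1) ∧ r = ∫ x in G, vdiv g x }

/-- The perimeter `P_Ω(G)` of `G` in `Ω`. -/
noncomputable def perim {n : ℕ} (Ω G : Set (EuclideanSpace ℝ (Fin n))) : ℝ :=
  sSup (perimSet Ω G)

/-! ### Auxiliary material -/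

section Aux

open intervalIntegral

/-- The density `6·max(s(1-s),0)`, a continuous truncation of `6s(1-s)`. -/
noncomputable def thf (s : ℝ) : ℝ := 6 * max (s * (1 - s)) 0

lemma thf_cont : Continuous thf := by
  unfold thf; fun_prop

lemma thf_nonneg (s : ℝ) : 0 ≤ thf s := by
  unfold thf; positivity

lemma thf_le (s : ℝ) : thf s ≤ Real.sqrt (2 * W s) := by
  have h : 2 * W s = (6 * (s * (1 - s))) ^ 2 := by unfold W; ring
  rw [h, Real.sqrt_sq_eq_abs, abs_mul]
  unfold thf
  rw [abs_of_nonneg (by norm_num : (0:ℝ) ≤ 6)]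
  gcongr
  exact max_le (le_abs_self _) (abs_nonneg _)

/-- A `C¹` transition function with `Th = 0` on `(-∞,0]`, `Th = 1` on `[1,∞)` and
`Th' = thf`. -/
noncomputable def Th (t : ℝ) : ℝ := ∫ s in (0:ℝ)..t, thf s

lemma Th_hasDerivAt (t : ℝ) : HasDerivAt Th (thf t) t :=
  (integral_hasStrictDerivAt_right (thf_cont.intervalIntegrable _ _)
    (thf_cont.stronglyMeasurableAtFilter _ _) thf_cont.continuousAt).hasDerivAt

lemma Th_contDiff : ContDiff ℝ 1 Th := by
  rw [contDiff_one_iff_deriv]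
  have h : deriv Th = thf := funext fun t => (Th_hasDerivAt t).deriv
  exact ⟨fun t => (Th_hasDerivAt t).differentiableAt, h ▸ thf_cont⟩

lemma Th_deriv : deriv Th = thf := funext fun t => (Th_hasDerivAt t).deriv

lemma Th_mono : Monotone Th := by
  apply monotone_of_deriv_nonneg (fun t => (Th_hasDerivAt t).differentiableAt)
  intro t; rw [Th_deriv]; exact thf_nonneg t

lemma thf_eq_zero_of_nonpos {s : ℝ} (hs : s ≤ 0) : thf s = 0 := by
  unfold thf
  rw [max_eq_right (mul_nonpos_of_nonpos_of_nonneg hs (by linarith))]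
  ring

lemma thf_eq_zero_of_one_le {s : ℝ} (hs : 1 ≤ s) : thf s = 0 := by
  unfold thf
  rw [max_eq_right (mul_nonpos_of_nonneg_of_nonpos (by linarith) (by linarith))]
  ring

lemma Th_of_nonpos {t : ℝ} (ht : t ≤ 0) : Th t = 0 := by
  unfold Th
  have : ∫ s in (0:ℝ)..t, thf s = ∫ s in (0:ℝ)..t, (0:ℝ) := by
    apply intervalIntegral.integral_congr
    intro s hs
    rw [Set.uIcc_of_ge ht] at hs
    exact thf_eq_zero_of_nonpos hs.2
  rw [this, intervalIntegral.integral_zero]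

lemma Th_one : Th 1 = 1 := by
  unfold Th
  have h : ∀ s ∈ Set.uIcc (0:ℝ) 1, thf s = 6 * s - 6 * s ^ 2 := by
    intro s hs
    rw [Set.uIcc_of_le (by norm_num)] at hs
    unfold thf
    rw [max_eq_left (mul_nonneg hs.1 (by linarith [hs.2]))]
    ring
  rw [intervalIntegral.integral_congr h,
    intervalIntegral.integral_sub ((by fun_prop : Continuous fun s:ℝ => 6*s).intervalIntegrable _ _)
      ((by fun_prop : Continuous fun s:ℝ => 6*s^2).intervalIntegrable _ _)]
  have h1 : ∫ s in (0:ℝ)..1, 6 * s = 3 := by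
    rw [intervalIntegral.integral_const_mul, integral_id]; norm_num
  have h2 : ∫ s in (0:ℝ)..1, 6 * s ^ 2 = 2 := by
    rw [intervalIntegral.integral_const_mul, integral_pow]; norm_num
  rw [h1, h2]; norm_num

lemma Th_of_one_le {t : ℝ} (ht : 1 ≤ t) : Th t = 1 := by
  have : Th t - Th 1 = 0 := by
    unfold Th
    rw [intervalIntegral.integral_interval_sub_left (thf_cont.intervalIntegrable _ _)
      (thf_cont.intervalIntegrable _ _)]
    have : ∫ s in (1:ℝ)..t, thf s = ∫ s in (1:ℝ)..t, (0:ℝ) := by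
      apply intervalIntegral.integral_congr
      intro s hs
      rw [Set.uIcc_of_le ht] at hs
      exact thf_eq_zero_of_one_le hs.1
    rw [this, intervalIntegral.integral_zero]
  have h1 := Th_one
  linarith

lemma Th_mem (t : ℝ) : 0 ≤ Th t ∧ Th t ≤ 1 := by
  constructor
  · have h0 : Th (min t 0) = 0 := Th_of_nonpos (min_le_right t 0)
    linarith [Th_mono (min_le_left t 0), h0]
  · have h1 : Th (max t 1) = 1 := Th_of_one_le (le_max_right t 1)
    linarith [Th_mono (le_max_left t 1)]

/-! #### Algebraic inequalities -/

lemma amgm {ξ Wv t : ℝ} (hξ : 0 < ξ) (hW : 0 ≤ Wv) (_ht : 0 ≤ t) :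
    Real.sqrt (2*Wv) * t ≤ ξ/2*t^2 + Wv/ξ := by
  set s := Real.sqrt (2*Wv) with hs
  have hs2 : s^2 = 2*Wv := Real.sq_sqrt (by positivity)
  have h2 : ξ/2*t^2 + Wv/ξ - s*t = (ξ*t - s)^2/(2*ξ) := by
    field_simp
    ring_nf
    nlinarith [hs2]
  nlinarith [div_nonneg (sq_nonneg (ξ*t - s)) (by positivity : (0:ℝ) ≤ 2*ξ)]

lemma absbound {ε A B st : ℝ} (hε : 0 < ε) (hA : 0 ≤ A) (hB : 0 ≤ B)
    (hst : st = 2*Real.sqrt A*Real.sqrt B) :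
    |A - B| ≤ 2*ε*(A+B) + (A+B-st)/(4*ε) := by
  set p := Real.sqrt A with hp
  set q := Real.sqrt B with hq
  have hp2 : p^2 = A := Real.sq_sqrt hA
  have hq2 : q^2 = B := Real.sq_sqrt hB
  have hp0 : 0 ≤ p := Real.sqrt_nonneg _
  have hq0 : 0 ≤ q := Real.sqrt_nonneg _
  have hmain : |A - B| - 2*ε*(A+B) ≤ (A+B-st)/(4*ε) := by
    rw [le_div_iff₀ (by positivity)]
    rcases abs_cases (A - B) with ⟨habs, _⟩ | ⟨habs, _⟩ <;> rw [habs] <;>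
      nlinarith [sq_nonneg (2*ε*(p+q) - (p-q)), sq_nonneg (2*ε*(p+q) + (p-q)),
        sq_nonneg (p-q), sq_nonneg (p+q), mul_pos hε hε]
  linarith

lemma st_eq {ξ Wv t : ℝ} (hξ : 0 < ξ) (hW : 0 ≤ Wv) (ht : 0 ≤ t) :
    Real.sqrt (2*Wv) * t = 2 * Real.sqrt (ξ/2*t^2) * Real.sqrt (Wv/ξ) := by
  rw [mul_assoc, ← Real.sqrt_mul (by positivity)]
  have h1 : ξ/2*t^2 * (Wv/ξ) = (Real.sqrt (2*Wv)*t/2)^2 := by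
    rw [div_pow, mul_pow, Real.sq_sqrt (by positivity)]
    field_simp
  rw [h1, Real.sqrt_sq (by positivity)]
  ring

/-! #### Divergence theorem for compactly supported fields -/

lemma abs_coord_le {n : ℕ} (x : EuclideanSpace ℝ (Fin n)) (i : Fin n) : |x i| ≤ ‖x‖ := by
  rw [EuclideanSpace.norm_eq]
  calc |x i| = Real.sqrt (|x i|^2) := by rw [Real.sqrt_sq_eq_abs, abs_abs]
  _ ≤ _ := by
      apply Real.sqrt_le_sqrt
      exact Finset.single_le_sum (f := fun j => |x j|^2) (fun j _ => sq_nonneg _) (Finset.mem_univ i)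

lemma norm_gradient {n : ℕ} (f : EuclideanSpace ℝ (Fin n) → ℝ) (x : EuclideanSpace ℝ (Fin n)) :
    ‖gradient f x‖ = ‖fderiv ℝ f x‖ := by
  rw [gradient]; exact LinearIsometryEquiv.norm_map _ _

lemma vdiv_continuous {n : ℕ} {g : EuclideanSpace ℝ (Fin n) → EuclideanSpace ℝ (Fin n)}
    (hg : ContDiff ℝ 1 g) : Continuous (vdiv g) := by
  unfold vdiv
  apply continuous_finset_sum
  intro i _
  have h1 : Continuous fun x => fderiv ℝ g x := hg.continuous_fderiv one_ne_zero
  have h2 : Continuous fun x => fderiv ℝ g x (EuclideanSpace.single i 1) :=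
    (ContinuousLinearMap.apply ℝ _ (EuclideanSpace.single i (1:ℝ))).continuous.comp h1
  have h3 : Continuous fun v : EuclideanSpace ℝ (Fin n) => v i :=
    (continuous_apply i).comp (PiLp.continuous_ofLp 2 _)
  exact h3.comp h2

lemma vdiv_zero_of_nmem {n : ℕ} {g : EuclideanSpace ℝ (Fin n) → EuclideanSpace ℝ (Fin n)}
    {x : EuclideanSpace ℝ (Fin n)} (hx : x ∉ tsupport g) : vdiv g x = 0 := by
  have hU : IsOpen (tsupport g)ᶜ := (isClosed_tsupport g).isOpen_compl
  have hev : g =ᶠ[nhds x] (fun _ => 0) := by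
    filter_upwards [hU.mem_nhds hx] with z hz
    exact image_eq_zero_of_notMem_tsupport hz
  unfold vdiv
  rw [hev.fderiv_eq, fderiv_const_apply 0]
  simp

lemma vdiv_bound {n : ℕ} {g : EuclideanSpace ℝ (Fin n) → EuclideanSpace ℝ (Fin n)}
    (hg : ContDiff ℝ 1 g) (hsupp : HasCompactSupport g) : ∃ C, ∀ x, |vdiv g x| ≤ C := by
  have hsub : tsupport (vdiv g) ⊆ tsupport g := by
    apply closure_minimal _ (isClosed_tsupport g)
    intro x hx
    by_contra hc
    exact hx (vdiv_zero_of_nmem hc)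
  have hcs : HasCompactSupport (vdiv g) :=
    IsCompact.of_isClosed_subset hsupp (isClosed_tsupport _) hsub
  obtain ⟨C, hC⟩ := hcs.exists_bound_of_continuous (vdiv_continuous hg)
  exact ⟨C, fun x => by rw [← Real.norm_eq_abs]; exact hC x⟩

lemma integral_vdiv_eq_zero {m : ℕ}
    (F : EuclideanSpace ℝ (Fin (m+1)) → EuclideanSpace ℝ (Fin (m+1)))
    (hF : ContDiff ℝ 1 F) (hsupp : HasCompactSupport F) :
    ∫ x, vdiv F x = 0 := by
  set e := EuclideanSpace.equiv (Fin (m+1)) ℝ with he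
  set G : (Fin (m+1) → ℝ) → (Fin (m+1) → ℝ) := fun y => e (F (e.symm y)) with hG
  set G' : (Fin (m+1) → ℝ) → (Fin (m+1) → ℝ) →L[ℝ] (Fin (m+1) → ℝ) := fun y =>
    ((e : EuclideanSpace ℝ (Fin (m+1)) →L[ℝ] (Fin (m+1) → ℝ)).comp
      (fderiv ℝ F ((e.symm : (Fin (m+1) → ℝ) →L[ℝ] EuclideanSpace ℝ (Fin (m+1))) y))).comp
      (e.symm : (Fin (m+1) → ℝ) →L[ℝ] EuclideanSpace ℝ (Fin (m+1))) with hG'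
  have hFd : Differentiable ℝ F := hF.differentiable one_ne_zero
  have hGd : ∀ y, HasFDerivAt G (G' y) y := by
    intro y
    exact (e.toContinuousLinearMap.hasFDerivAt.comp _
      ((hFd _).hasFDerivAt.comp _ e.symm.toContinuousLinearMap.hasFDerivAt))
  have hdiv : ∀ y, (∑ i, G' y (Pi.single i 1) i) = vdiv F (e.symm y) := by
    intro y; rfl
  obtain ⟨r, hr⟩ := (hsupp.isCompact.isBounded).subset_closedBall 0
  set R : ℝ := max r 0 + 1 with hR
  have hRpos : 0 < R := by positivity
  have hFzero : ∀ x : EuclideanSpace ℝ (Fin (m+1)), R ≤ ‖x‖ → F x = 0 := by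
    intro x hx
    apply image_eq_zero_of_notMem_tsupport
    intro hmem
    have h1 := hr hmem
    simp only [Metric.mem_closedBall, dist_zero_right] at h1
    have : ‖x‖ ≤ max r 0 := le_trans h1 (le_max_left _ _)
    linarith
  set a : Fin (m+1) → ℝ := fun _ => -R with ha
  set b : Fin (m+1) → ℝ := fun _ => R with hb
  have hle : a ≤ b := fun i => by simp only [ha, hb]; linarith
  have hGz : ∀ y : Fin (m+1) → ℝ, (∃ i, R ≤ |y i|) → G y = 0 := by
    rintro y ⟨i, hi⟩
    have h2 : R ≤ ‖e.symm y‖ := le_trans hi (abs_coord_le (e.symm y) i)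
    have hz := hFzero _ h2
    simp [hG, hz]
  have hdivz : ∀ y ∉ Set.Icc a b, (∑ i, G' y (Pi.single i 1) i) = 0 := by
    intro y hy
    have hyex : ∃ i, R < |y i| := by
      by_contra hcon
      push_neg at hcon
      apply hy
      rw [Set.mem_Icc]
      refine ⟨fun i => ?_, fun i => ?_⟩
      · have h := (abs_le.1 (hcon i)).1
        show -R ≤ y i
        linarith
      · have h := (abs_le.1 (hcon i)).2
        show y i ≤ R
        linarith
    obtain ⟨i, hi⟩ := hyex
    have hopen : IsOpen {z : Fin (m+1) → ℝ | R < |z i|} :=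
      isOpen_lt continuous_const ((continuous_apply i).abs)
    have hmem : y ∈ {z : Fin (m+1) → ℝ | R < |z i|} := hi
    have hev : G =ᶠ[nhds y] (fun _ => 0) := by
      filter_upwards [hopen.mem_nhds hmem] with z hz
      exact hGz z ⟨i, hz.le⟩
    have h3 : fderiv ℝ G y = 0 := by
      rw [hev.fderiv_eq]; exact fderiv_const_apply 0
    have h4 : G' y = fderiv ℝ G y := ((hGd y).fderiv).symm
    rw [h4, h3]
    simp
  have hGcont : Continuous G := e.continuous.comp (hF.continuous.comp e.symm.continuous)
  have hdivcont : Continuous fun y => ∑ i, G' y (Pi.single i 1) i := by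
    have hfc : Continuous fun y => fderiv ℝ F ((e.symm : (Fin (m+1) → ℝ) →L[ℝ] _) y) :=
      (hF.continuous_fderiv one_ne_zero).comp e.symm.continuous
    apply continuous_finset_sum
    intro i _
    have : Continuous fun y => (fderiv ℝ F ((e.symm : (Fin (m+1) → ℝ) →L[ℝ] _) y))
        (EuclideanSpace.single i 1) :=
      (ContinuousLinearMap.apply ℝ _ (EuclideanSpace.single i (1:ℝ))).continuous.comp hfc
    exact (PiLp.continuous_apply 2 _ i).comp this
  have hbox := MeasureTheory.integral_divergence_of_hasFDerivAt_off_countable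
    (a := a) (b := b) hle G G' ∅ Set.countable_empty (hGcont.continuousOn)
    (fun x hx => hGd x)
    ((hdivcont.continuousOn).integrableOn_compact isCompact_Icc)
  have hfaces : ∀ i : Fin (m+1),
      ((∫ x in Set.Icc (a ∘ i.succAbove) (b ∘ i.succAbove), G (i.insertNth (b i) x) i) -
       ∫ x in Set.Icc (a ∘ i.succAbove) (b ∘ i.succAbove), G (i.insertNth (a i) x) i) = 0 := by
    intro i
    have h1 : ∀ x : Fin m → ℝ, G (i.insertNth (b i) x) i = 0 := by
      intro x
      rw [hGz (i.insertNth (b i) x)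
        ⟨i, by rw [Fin.insertNth_apply_same]; show R ≤ |R|; rw [abs_of_pos hRpos]⟩]
      rfl
    have h2 : ∀ x : Fin m → ℝ, G (i.insertNth (a i) x) i = 0 := by
      intro x
      rw [hGz (i.insertNth (a i) x)
        ⟨i, by rw [Fin.insertNth_apply_same]; show R ≤ |-R|; rw [abs_neg, abs_of_pos hRpos]⟩]
      rfl
    simp [h1, h2]
  rw [Finset.sum_congr rfl (fun i _ => hfaces i), Finset.sum_const, smul_zero] at hbox
  have htot : ∫ y, (∑ i, G' y (Pi.single i 1) i) = 0 := by
    rw [← MeasureTheory.setIntegral_eq_integral_of_forall_compl_eq_zero hdivz]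
    exact hbox
  have hmp := (EuclideanSpace.volume_preserving_symm_measurableEquiv_toLp (ι := Fin (m+1))).symm
  have hcomp : ∫ x, vdiv F x = ∫ y, vdiv F ((MeasurableEquiv.toLp 2 (Fin (m+1) → ℝ)) y) :=
    (hmp.integral_comp (MeasurableEquiv.toLp 2 (Fin (m+1) → ℝ)).measurableEmbedding _).symm
  rw [hcomp, ← htot]
  congr 1

/-! #### Integration by parts -/

lemma clm_sum_single {n : ℕ} (L : EuclideanSpace ℝ (Fin n) →L[ℝ] ℝ)
    (v : EuclideanSpace ℝ (Fin n)) :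
    ∑ i, L (EuclideanSpace.single i 1) * v i = L v := by
  have hv : v = ∑ i, v i • EuclideanSpace.single i (1:ℝ) := by
    have h := (EuclideanSpace.basisFun (Fin n) ℝ).sum_repr v
    simp only [EuclideanSpace.basisFun_repr, EuclideanSpace.basisFun_apply] at h
    exact h.symm
  conv_rhs => rw [hv]
  rw [map_sum]
  congr 1
  funext i
  rw [L.map_smul]
  simp [mul_comm]

lemma ibp {m : ℕ} {Ω : Set (EuclideanSpace ℝ (Fin (m+1)))} (hΩopen : IsOpen Ω)
    {u : EuclideanSpace ℝ (Fin (m+1)) → ℝ} (hu : ContDiffOn ℝ 1 u Ω)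
    {g : EuclideanSpace ℝ (Fin (m+1)) → EuclideanSpace ℝ (Fin (m+1))}
    (hg : ContDiff ℝ 1 g) (hgsupp : HasCompactSupport g) (hgΩ : tsupport g ⊆ Ω) :
    ∫ x in Ω, (u x * vdiv g x + (fderiv ℝ u x) (g x)) = 0 := by
  set F : EuclideanSpace ℝ (Fin (m+1)) → EuclideanSpace ℝ (Fin (m+1)) :=
    fun x => u x • g x with hF
  have hgz : ∀ x ∉ tsupport g, g x = 0 := fun x hx => image_eq_zero_of_notMem_tsupport hx
  have hFc : ContDiff ℝ 1 F := by
    rw [← contDiffOn_univ]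
    apply contDiffOn_of_locally_contDiffOn
    intro x _
    by_cases hx : x ∈ Ω
    · exact ⟨Ω, hΩopen, hx, by
        rw [Set.univ_inter]
        exact hu.smul (hg.contDiffOn)⟩
    · refine ⟨(tsupport g)ᶜ, (isClosed_tsupport g).isOpen_compl,
        fun hc => hx (hgΩ hc), ?_⟩
      rw [Set.univ_inter]
      apply ContDiffOn.congr (contDiffOn_const (c := (0 : EuclideanSpace ℝ (Fin (m+1)))))
      intro y hy
      simp only [hF, hgz y hy, smul_zero]
  have hFsupp : HasCompactSupport F := hgsupp.smul_left (f := u)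
  have hzero : ∀ x ∉ Ω, vdiv F x = 0 := by
    intro x hx
    have hU : IsOpen (tsupport g)ᶜ := (isClosed_tsupport g).isOpen_compl
    have hxU : x ∈ (tsupport g)ᶜ := fun hc => hx (hgΩ hc)
    have hev : F =ᶠ[nhds x] (fun _ => 0) := by
      filter_upwards [hU.mem_nhds hxU] with z hz
      simp only [hF, hgz z hz, smul_zero]
    unfold vdiv
    rw [hev.fderiv_eq, fderiv_const_apply 0]
    simp
  have hid : ∀ x ∈ Ω, u x * vdiv g x + (fderiv ℝ u x) (g x) = vdiv F x := by
    intro x hx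
    have hux : HasFDerivAt u (fderiv ℝ u x) x :=
      ((hu.differentiableOn one_ne_zero).differentiableAt (hΩopen.mem_nhds hx)).hasFDerivAt
    have hgx : HasFDerivAt g (fderiv ℝ g x) x := (hg.differentiable one_ne_zero x).hasFDerivAt
    have hFx : HasFDerivAt F (u x • fderiv ℝ g x + (fderiv ℝ u x).smulRight (g x)) x :=
      hux.smul hgx
    unfold vdiv
    rw [hFx.fderiv]
    have hterm : ∀ i : Fin (m+1),
        ((u x • fderiv ℝ g x + (fderiv ℝ u x).smulRight (g x)) (EuclideanSpace.single i 1)) i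
        = u x * (fderiv ℝ g x (EuclideanSpace.single i 1) i)
          + (fderiv ℝ u x (EuclideanSpace.single i 1)) * g x i := by
      intro i
      simp [PiLp.add_apply, PiLp.smul_apply, smul_eq_mul, ContinuousLinearMap.smulRight_apply]
    rw [Finset.sum_congr rfl (fun i _ => hterm i), Finset.sum_add_distrib, ← Finset.mul_sum,
      clm_sum_single (fderiv ℝ u x) (g x)]
  calc ∫ x in Ω, (u x * vdiv g x + (fderiv ℝ u x) (g x))
      = ∫ x in Ω, vdiv F x := setIntegral_congr_fun hΩopen.measurableSet hid
    _ = ∫ x, vdiv F x := setIntegral_eq_integral_of_forall_compl_eq_zero hzero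
    _ = 0 := integral_vdiv_eq_zero F hFc hFsupp

end Aux

/-- asymptotic equi-partition of energy. -/
theorem equipartition_abs {n : ℕ} (hn : 2 ≤ n)
    (Ω : Set (EuclideanSpace ℝ (Fin n))) (hΩne : Ω.Nonempty) (hΩopen : IsOpen Ω)
    (hΩbdd : Bornology.IsBounded Ω)
    (G : Set (EuclideanSpace ℝ (Fin n))) (hGmeas : MeasurableSet G) (hGΩ : G ⊆ Ω)
    (hPfin : BddAbove (perimSet Ω G))
    (ξ : ℕ → ℝ) (hξpos : ∀ k, 0 < ξ k) (hξanti : StrictAnti ξ)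
    (hξ0 : Tendsto ξ atTop (𝓝 0))
    (φ : ℕ → EuclideanSpace ℝ (Fin n) → ℝ)
    (hφ : ∀ k, ContDiffOn ℝ 1 (φ k) Ω)
    (hgradInt : ∀ k, IntegrableOn (fun x => ‖gradient (φ k) x‖ ^ 2) Ω)
    (hWInt : ∀ k, IntegrableOn (fun x => W (φ k x)) Ω)
    (hae : ∀ᵐ x ∂(volume.restrict Ω),
      Tendsto (fun k => φ k x) atTop (𝓝 (G.indicator (fun _ => (1 : ℝ)) x)))
    (henergy : Tendsto
      (fun k => ∫ x in Ω, (ξ k / 2 * ‖gradient (φ k) x‖ ^ 2 + W (φ k x) / ξ k))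
      atTop (𝓝 (perim Ω G))) :
    Tendsto (fun k => ∫ x in Ω,
        |ξ k / 2 * ‖gradient (φ k) x‖ ^ 2 - W (φ k x) / ξ k|)
      atTop (𝓝 0) := by
  obtain ⟨m, rfl⟩ : ∃ m, n = m + 1 := ⟨n - 1, by omega⟩
  clear hn hξanti hξ0
  have hΩmeas : MeasurableSet Ω := hΩopen.measurableSet
  have hμfin : IsFiniteMeasure (volume.restrict Ω) := by
    constructor
    rw [Measure.restrict_apply_univ]
    exact hΩbdd.measure_lt_top
  have hWnn : ∀ s, 0 ≤ W s := fun s => by unfold W; positivity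
  -- energies
  set P := perim Ω G with hPdef
  set E : ℕ → ℝ :=
    fun k => ∫ x in Ω, (ξ k / 2 * ‖gradient (φ k) x‖ ^ 2 + W (φ k x) / ξ k) with hEdef
  set Efun : ℕ → EuclideanSpace ℝ (Fin (m+1)) → ℝ :=
    fun k x => ξ k / 2 * ‖gradient (φ k) x‖ ^ 2 + W (φ k x) / ξ k with hEfun
  have hgradInt' : ∀ k, Integrable (fun x => ξ k / 2 * ‖gradient (φ k) x‖ ^ 2)
      (volume.restrict Ω) := fun k => (hgradInt k).const_mul _
  have hWInt' : ∀ k, Integrable (fun x => W (φ k x) / ξ k) (volume.restrict Ω) :=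
    fun k => (hWInt k).div_const _
  have hEint : ∀ k, Integrable (Efun k) (volume.restrict Ω) :=
    fun k => (hgradInt' k).add (hWInt' k)
  have hgm : ∀ k, AEStronglyMeasurable (fun x => ‖gradient (φ k) x‖) (volume.restrict Ω) := by
    intro k
    have h1 := (hgradInt k).aestronglyMeasurable
    have h2 : (fun x => Real.sqrt (‖gradient (φ k) x‖^2)) = fun x => ‖gradient (φ k) x‖ := by
      funext x; exact Real.sqrt_sq (norm_nonneg _)
    rw [← h2]
    exact Real.continuous_sqrt.comp_aestronglyMeasurable h1
  have hsqm : ∀ k, AEStronglyMeasurable (fun x => Real.sqrt (2 * W (φ k x)))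
      (volume.restrict Ω) :=
    fun k => Real.continuous_sqrt.comp_aestronglyMeasurable
      ((hWInt k).aestronglyMeasurable.const_mul 2)
  set Sfun : ℕ → EuclideanSpace ℝ (Fin (m+1)) → ℝ :=
    fun k x => Real.sqrt (2 * W (φ k x)) * ‖gradient (φ k) x‖ with hSfun
  have hSptwise : ∀ k x, Sfun k x ≤ Efun k x := fun k x =>
    amgm (hξpos k) (hWnn _) (norm_nonneg _)
  have hS0ptwise : ∀ k x, 0 ≤ Sfun k x := fun k x =>
    mul_nonneg (Real.sqrt_nonneg _) (norm_nonneg _)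
  have hSint : ∀ k, Integrable (Sfun k) (volume.restrict Ω) := by
    intro k
    apply Integrable.mono' (hEint k) ((hsqm k).mul (hgm k))
    filter_upwards with x
    show ‖Sfun k x‖ ≤ Efun k x
    rw [Real.norm_eq_abs, abs_of_nonneg (hS0ptwise k x)]
    exact hSptwise k x
  set S : ℕ → ℝ := fun k => ∫ x in Ω, Sfun k x with hSdef
  have hSleE : ∀ k, S k ≤ E k := fun k => integral_mono (hSint k) (hEint k) (hSptwise k)
  have hSnn : ∀ k, 0 ≤ S k := fun k => integral_nonneg (hS0ptwise k)
  -- 0 belongs to the perimeter set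
  have h0mem : (0:ℝ) ∈ perimSet Ω G := by
    refine ⟨fun _ => 0, contDiff_const, ?_, ?_, fun x => by simp, ?_⟩
    · have hsup : Function.support
          (fun _ : EuclideanSpace ℝ (Fin (m+1)) => (0:EuclideanSpace ℝ (Fin (m+1)))) = ∅ := by
        simp [Function.support]
      rw [HasCompactSupport, tsupport, hsup, closure_empty]
      exact isCompact_empty
    · have hsup : Function.support
          (fun _ : EuclideanSpace ℝ (Fin (m+1)) => (0:EuclideanSpace ℝ (Fin (m+1)))) = ∅ := by
        simp [Function.support]
      rw [tsupport, hsup, closure_empty]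
      exact Set.empty_subset _
    · have hz : ∀ x, vdiv (fun _ : EuclideanSpace ℝ (Fin (m+1)) =>
          (0:EuclideanSpace ℝ (Fin (m+1)))) x = 0 := by
        intro x
        unfold vdiv
        rw [fderiv_const_apply 0]
        simp
      simp [hz]
  have hPnn : 0 ≤ P := le_csSup hPfin h0mem
  -- Step: the sqrt-energy converges to the perimeter
  have hStend : Tendsto S atTop (𝓝 P) := by
    rw [Metric.tendsto_atTop]
    intro δ hδ
    obtain ⟨r, hrmem, hrgt⟩ :=
      exists_lt_of_lt_csSup ⟨0, h0mem⟩ (by linarith : P - δ/2 < P)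
    have hrleP : r ≤ P := le_csSup hPfin hrmem
    obtain ⟨g, hgsm, hgsupp, hgΩ, hgnorm, hreq⟩ := hrmem
    have hvdcont : Continuous (vdiv g) := vdiv_continuous hgsm
    obtain ⟨C, hC⟩ := vdiv_bound hgsm hgsupp
    set T : ℕ → ℝ := fun k => ∫ x in Ω, Th (φ k x) * vdiv g x with hTdef
    have hucd : ∀ k, ContDiffOn ℝ 1 (fun x => Th (φ k x)) Ω :=
      fun k => Th_contDiff.comp_contDiffOn (hφ k)
    have hTmeas : ∀ k, AEStronglyMeasurable (fun x => Th (φ k x) * vdiv g x)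
        (volume.restrict Ω) := by
      intro k
      exact ((Th_contDiff.continuous.comp_continuousOn
        (hφ k).continuousOn).aestronglyMeasurable hΩmeas).mul hvdcont.aestronglyMeasurable
    have hTabs : ∀ k x, |Th (φ k x) * vdiv g x| ≤ C := by
      intro k x
      rw [abs_mul]
      have h1 : |Th (φ k x)| ≤ 1 :=
        abs_le.mpr ⟨by linarith [(Th_mem (φ k x)).1], (Th_mem (φ k x)).2⟩
      calc |Th (φ k x)| * |vdiv g x| ≤ 1 * C :=
            mul_le_mul h1 (hC x) (abs_nonneg _) one_pos.le
        _ = C := one_mul C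
    -- dominated convergence
    have hTlim : Tendsto T atTop (𝓝 r) := by
      have hDCT := tendsto_integral_of_dominated_convergence (μ := volume.restrict Ω)
        (F := fun k x => Th (φ k x) * vdiv g x)
        (f := fun x => G.indicator (fun _ => (1:ℝ)) x * vdiv g x)
        (fun _ => C) hTmeas (integrable_const C)
        (fun k => by filter_upwards with x; rw [Real.norm_eq_abs]; exact hTabs k x)
        (by
          filter_upwards [hae] with x hx
          have h1 : Tendsto (fun k => Th (φ k x)) atTop
              (𝓝 (Th (G.indicator (fun _ => (1:ℝ)) x))) :=
            (Th_contDiff.continuous.continuousAt.tendsto).comp hx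
          have h2 : Th (G.indicator (fun _ => (1:ℝ)) x) = G.indicator (fun _ => (1:ℝ)) x := by
            by_cases hxG : x ∈ G
            · simp [Set.indicator_of_mem hxG, Th_of_one_le le_rfl]
            · simp [Set.indicator_of_notMem hxG, Th_of_nonpos le_rfl]
          rw [h2] at h1
          exact h1.mul_const _)
      have heq : ∫ x in Ω, G.indicator (fun _ => (1:ℝ)) x * vdiv g x = r := by
        have h3 : (fun x => G.indicator (fun _ => (1:ℝ)) x * vdiv g x)
            = G.indicator (fun x => vdiv g x) := by
          funext x
          by_cases hxG : x ∈ G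
          · simp [Set.indicator_of_mem hxG]
          · simp [Set.indicator_of_notMem hxG]
        rw [h3, integral_indicator hGmeas, Measure.restrict_restrict hGmeas,
          Set.inter_eq_left.mpr hGΩ, hreq]
      rw [← heq]
      exact hDCT
    -- T k ≤ S k via integration by parts
    have hTleS : ∀ k, T k ≤ S k := by
      intro k
      have hibp := ibp hΩopen (hucd k) hgsm hgsupp hgΩ
      have hAint : Integrable (fun x => Th (φ k x) * vdiv g x) (volume.restrict Ω) := by
        apply Integrable.mono' (integrable_const C) (hTmeas k)
        filter_upwards with x
        rw [Real.norm_eq_abs]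
        exact hTabs k x
      have hBbound : ∀ x ∈ Ω, |(fderiv ℝ (fun y => Th (φ k y)) x) (g x)| ≤ Sfun k x := by
        intro x hx
        have hφx : DifferentiableAt ℝ (φ k) x :=
          ((hφ k).differentiableOn one_ne_zero).differentiableAt (hΩopen.mem_nhds hx)
        have hcomp : HasFDerivAt (fun y => Th (φ k y))
            (thf (φ k x) • fderiv ℝ (φ k) x) x :=
          (Th_hasDerivAt (φ k x)).comp_hasFDerivAt x hφx.hasFDerivAt
        rw [hcomp.fderiv]
        calc |(thf (φ k x) • fderiv ℝ (φ k) x) (g x)|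
            ≤ ‖thf (φ k x) • fderiv ℝ (φ k) x‖ * ‖g x‖ := by
              rw [← Real.norm_eq_abs]
              exact (thf (φ k x) • fderiv ℝ (φ k) x).le_opNorm (g x)
          _ ≤ ‖thf (φ k x) • fderiv ℝ (φ k) x‖ * 1 := by
              apply mul_le_mul_of_nonneg_left (hgnorm x) (norm_nonneg _)
          _ = thf (φ k x) * ‖fderiv ℝ (φ k) x‖ := by
              rw [mul_one, norm_smul, Real.norm_eq_abs, abs_of_nonneg (thf_nonneg _)]
          _ = thf (φ k x) * ‖gradient (φ k) x‖ := by rw [norm_gradient]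
          _ ≤ Real.sqrt (2 * W (φ k x)) * ‖gradient (φ k) x‖ :=
              mul_le_mul_of_nonneg_right (thf_le _) (norm_nonneg _)
      have hBmeas : AEStronglyMeasurable (fun x => (fderiv ℝ (fun y => Th (φ k y)) x) (g x))
          (volume.restrict Ω) := by
        apply ContinuousOn.aestronglyMeasurable _ hΩmeas
        exact ((hucd k).continuousOn_fderiv_of_isOpen hΩopen le_rfl).clm_apply
          hgsm.continuous.continuousOn
      have hBint : Integrable (fun x => (fderiv ℝ (fun y => Th (φ k y)) x) (g x))
          (volume.restrict Ω) := by
        apply Integrable.mono' (hSint k) hBmeas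
        filter_upwards [self_mem_ae_restrict hΩmeas] with x hx
        rw [Real.norm_eq_abs]
        exact hBbound x hx
      have hsplit : T k + (∫ x in Ω, (fderiv ℝ (fun y => Th (φ k y)) x) (g x)) = 0 := by
        rw [hTdef, ← integral_add hAint hBint]
        exact hibp
      have hTk : T k = - ∫ x in Ω, (fderiv ℝ (fun y => Th (φ k y)) x) (g x) := by linarith
      rw [hTk]
      calc - ∫ x in Ω, (fderiv ℝ (fun y => Th (φ k y)) x) (g x)
          ≤ |∫ x in Ω, (fderiv ℝ (fun y => Th (φ k y)) x) (g x)| := neg_le_abs _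
        _ ≤ ∫ x in Ω, |(fderiv ℝ (fun y => Th (φ k y)) x) (g x)| := by
            rw [← Real.norm_eq_abs]
            calc ‖∫ x in Ω, (fderiv ℝ (fun y => Th (φ k y)) x) (g x)‖
                ≤ ∫ x in Ω, ‖(fderiv ℝ (fun y => Th (φ k y)) x) (g x)‖ :=
                  norm_integral_le_integral_norm _
              _ = ∫ x in Ω, |(fderiv ℝ (fun y => Th (φ k y)) x) (g x)| := by
                  simp [Real.norm_eq_abs]
        _ ≤ ∫ x in Ω, Sfun k x := by
            apply integral_mono_ae hBint.abs (hSint k)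
            filter_upwards [self_mem_ae_restrict hΩmeas] with x hx
            exact hBbound x hx
    -- combine
    obtain ⟨N1, hN1⟩ := Metric.tendsto_atTop.mp henergy (δ/2) (by linarith)
    obtain ⟨N2, hN2⟩ := Metric.tendsto_atTop.mp hTlim (δ/2) (by linarith)
    refine ⟨max N1 N2, fun k hk => ?_⟩
    have h1 := hN1 k (le_trans (le_max_left _ _) hk)
    have h2 := hN2 k (le_trans (le_max_right _ _) hk)
    rw [Real.dist_eq] at h1 h2 ⊢
    obtain ⟨h1a, h1b⟩ := abs_lt.mp h1
    obtain ⟨h2a, h2b⟩ := abs_lt.mp h2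
    have hSk1 : S k ≤ E k := hSleE k
    have hSk2 : T k ≤ S k := hTleS k
    rw [abs_lt]
    constructor <;> linarith
  -- Step: conclude equipartition
  have hIint : ∀ k, Integrable
      (fun x => |ξ k / 2 * ‖gradient (φ k) x‖ ^ 2 - W (φ k x) / ξ k|)
      (volume.restrict Ω) := fun k => ((hgradInt' k).sub (hWInt' k)).abs
  have hIle : ∀ ε, 0 < ε → ∀ k,
      (∫ x in Ω, |ξ k / 2 * ‖gradient (φ k) x‖ ^ 2 - W (φ k x) / ξ k|)
        ≤ 2*ε*E k + (E k - S k)/(4*ε) := by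
    intro ε hε k
    have hpt : ∀ x, |ξ k / 2 * ‖gradient (φ k) x‖ ^ 2 - W (φ k x) / ξ k| ≤
        2*ε*(Efun k x) + (Efun k x - Sfun k x)/(4*ε) := by
      intro x
      exact absbound hε (mul_nonneg (div_nonneg (hξpos k).le (by norm_num)) (sq_nonneg _))
        (div_nonneg (hWnn _) (hξpos k).le)
        (st_eq (hξpos k) (hWnn _) (norm_nonneg _))
    have hR1 : Integrable (fun x => 2*ε*(Efun k x)) (volume.restrict Ω) :=
      (hEint k).const_mul _
    have hR2 : Integrable (fun x => (Efun k x - Sfun k x)/(4*ε)) (volume.restrict Ω) :=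
      ((hEint k).sub (hSint k)).div_const _
    calc (∫ x in Ω, |ξ k / 2 * ‖gradient (φ k) x‖ ^ 2 - W (φ k x) / ξ k|)
        ≤ ∫ x in Ω, (2*ε*(Efun k x) + (Efun k x - Sfun k x)/(4*ε)) :=
          integral_mono (hIint k) (hR1.add hR2) hpt
      _ = 2*ε*E k + (E k - S k)/(4*ε) := by
          rw [integral_add hR1 hR2, integral_const_mul, integral_div,
            integral_sub (hEint k) (hSint k)]
  rw [Metric.tendsto_atTop]
  intro δ hδ
  have hM : 0 < P + 1 := by linarith
  set ε := δ/(8*(P+1)) with hεdef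
  have hεpos : 0 < ε := by positivity
  obtain ⟨N1, hN1⟩ := Metric.tendsto_atTop.mp henergy 1 one_pos
  have hdiff : Tendsto (fun k => E k - S k) atTop (𝓝 0) := by
    have h := henergy.sub hStend
    simpa using h
  obtain ⟨N2, hN2⟩ := Metric.tendsto_atTop.mp hdiff (ε*δ) (by positivity)
  refine ⟨max N1 N2, fun k hk => ?_⟩
  have h1 := hN1 k (le_trans (le_max_left _ _) hk)
  have h2 := hN2 k (le_trans (le_max_right _ _) hk)
  rw [Real.dist_eq] at h1 h2 ⊢
  rw [sub_zero] at h2 ⊢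
  obtain ⟨h1a, h1b⟩ := abs_lt.mp h1
  obtain ⟨h2a, h2b⟩ := abs_lt.mp h2
  have hInn : 0 ≤ ∫ x in Ω, |ξ k / 2 * ‖gradient (φ k) x‖ ^ 2 - W (φ k x) / ξ k| :=
    integral_nonneg (fun x => abs_nonneg _)
  rw [abs_of_nonneg hInn]
  have hkey := hIle ε hεpos k
  have hb1 : 2*ε*E k ≤ 2*ε*(P+1) := by
    apply mul_le_mul_of_nonneg_left (by linarith) (by positivity)
  have hb1' : 2*ε*(P+1) = δ/4 := by
    rw [hεdef]; field_simp; ring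
  have hb2 : (E k - S k)/(4*ε) < (ε*δ)/(4*ε) := by
    rw [div_lt_div_iff_of_pos_right (by positivity)]
    exact h2b
  have hb2' : (ε*δ)/(4*ε) = δ/4 := by
    field_simp
  calc (∫ x in Ω, |ξ k / 2 * ‖gradient (φ k) x‖ ^ 2 - W (φ k x) / ξ k|)
      ≤ 2*ε*E k + (E k - S k)/(4*ε) := hkey
    _ < δ/4 + δ/4 := by
        apply add_lt_add_of_le_of_lt (hb1'.symm ▸ hb1)
        rw [← hb2']
        exact hb2
    _ < δ := by linarith
end

section
/- Let Ω ⊆ ℝⁿ (n ≥ 2) be a nonempty, open, bounded set and let G ⊆ Ω be Lebesgue-measurable with P_Ω(G) < ∞. Let ξ_k ↘ 0 and let φ_k : Ω → ℝ (k = 1, 2, …) be continuously differentiable with x ↦ |∇φ_k(x)|² and x ↦ W(φ_k(x)) Lebesgue integrable on Ω. Assume φ_k → χ_G almost everywhere in Ω and sup_{k ≥ 1} ∫_Ω [(ξ_k/2)|∇φ_k|² + W(φ_k)/ξ_k] dx < ∞. Define η_k(x) := ∫₀^{φ_k(x)} √(2 W(t)) dt. Then sup_{k ≥ 1} ‖η_k‖_{L^{4/3}(Ω)}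 < ∞ and sup_{k ≥ 1} ∫_Ω |∇η_k| dx < ∞; moreover η_k → χ_G almost everywhere in Ω and η_k → χ_G strongly in L^q(Ω) for every q with 1 ≤ q < 4/3. -/
open MeasureTheory Filter Topology RealInnerProductSpace
open scoped ENNReal NNReal

/-- `η_k(x) = ∫₀^{φ_k(x)} √(2W(t)) dt`. -/
noncomputable def etaFn {n : ℕ} (φ : ℕ → EuclideanSpace ℝ (Fin n) → ℝ) (k : ℕ)
    (x : EuclideanSpace ℝ (Fin n)) : ℝ :=
  ∫ t in (0 : ℝ)..(φ k x), Real.sqrt (2 * W t)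


lemma W_nonneg (s : ℝ) : 0 ≤ W s := by unfold W; positivity

lemma sqrt2W_eq (t : ℝ) : Real.sqrt (2 * W t) = |6 * (t - t ^ 2)| := by
  rw [show 2 * W t = (6 * (t - t ^ 2)) ^ 2 by unfold W; ring]
  exact Real.sqrt_sq_eq_abs _

lemma contW : Continuous fun t => Real.sqrt (2 * W t) := by
  apply Real.continuous_sqrt.comp
  unfold W; continuity

lemma eta_abs_le (s : ℝ) : |∫ t in (0:ℝ)..s, Real.sqrt (2 * W t)| ≤ 6 * s ^ 2 + 6 * |s| ^ 3 := by
  have h : ∀ t ∈ Set.uIoc (0:ℝ) s, ‖Real.sqrt (2 * W t)‖ ≤ 6 * |s| + 6 * s ^ 2 := by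
    intro t ht
    have ht' : |t| ≤ |s| := by
      rw [abs_le]
      exact ⟨le_trans (le_min (neg_nonpos.2 (abs_nonneg s)) (neg_abs_le s)) ht.1.le,
        le_trans ht.2 (max_le (abs_nonneg s) (le_abs_self s))⟩
    rw [Real.norm_eq_abs, abs_of_nonneg (Real.sqrt_nonneg _), sqrt2W_eq]
    calc |6 * (t - t ^ 2)| ≤ 6 * |t| + 6 * |t| ^ 2 := by
          rw [show 6 * (t - t^2) = 6*t - 6*t^2 by ring]
          refine (abs_sub _ _).trans ?_
          rw [abs_mul, abs_mul, abs_pow]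
          norm_num
      _ ≤ 6 * |s| + 6 * s ^ 2 := by
          have := sq_abs s
          nlinarith [abs_nonneg t, abs_nonneg s]
  have := intervalIntegral.norm_integral_le_of_norm_le_const h
  rw [Real.norm_eq_abs] at this
  refine this.trans ?_
  have : |s - 0| = |s| := by simp
  rw [this]
  nlinarith [abs_nonneg s, sq_abs s, sq_nonneg s]

lemma W_ge_abs (s : ℝ) : 18 * |s| ^ 2 * (1 - |s|) ^ 2 ≤ W s := by
  unfold W
  rcases le_or_gt 0 s with h | h
  · rw [abs_of_nonneg h]
  · rw [abs_of_neg h]; nlinarith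

lemma poly_ineq {t : ℝ} (ht : 0 ≤ t) :
    (6 * t ^ 2 + 6 * t ^ 3) ^ 4 ≤ (300 + 108 * t ^ 2 * (1 - t) ^ 2) ^ 3 := by
  have key : (6 * t ^ 2 + 6 * t ^ 3) ^ 4 = 1296 * t ^ 8 * (1 + t) ^ 4 := by ring
  rcases le_or_gt t 2 with h | h
  · have h1 : t ^ 8 ≤ 2 ^ 8 := pow_le_pow_left₀ ht h 8
    have h2 : (1 + t) ^ 4 ≤ 3 ^ 4 := pow_le_pow_left₀ (by linarith) (by linarith) 4
    have h3 : (300:ℝ) ^ 3 ≤ (300 + 108 * t ^ 2 * (1 - t) ^ 2) ^ 3 :=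
      pow_le_pow_left₀ (by norm_num) (by nlinarith [sq_nonneg t, sq_nonneg (1-t)]) 3
    calc (6 * t ^ 2 + 6 * t ^ 3) ^ 4 = 1296 * t ^ 8 * (1 + t) ^ 4 := key
      _ ≤ 1296 * 2 ^ 8 * 3 ^ 4 := by nlinarith [pow_nonneg ht 8, pow_nonneg (by linarith : (0:ℝ) ≤ 1 + t) 4]
      _ ≤ (300:ℝ) ^ 3 := by norm_num
      _ ≤ _ := h3
  · have hA : 27 * t ^ 4 ≤ 108 * t ^ 2 * (1 - t) ^ 2 := by nlinarith [sq_nonneg t, sq_nonneg (t - 2)]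
    have h4 : (27 * t ^ 4) ^ 3 ≤ (300 + 108 * t ^ 2 * (1 - t) ^ 2) ^ 3 :=
      pow_le_pow_left₀ (by positivity) (by linarith) 3
    have h5 : (1 + t) ≤ 3 / 2 * t := by linarith
    have h6 : (1 + t) ^ 4 ≤ (3 / 2 * t) ^ 4 := pow_le_pow_left₀ (by linarith) h5 4
    calc (6 * t ^ 2 + 6 * t ^ 3) ^ 4 = 1296 * t ^ 8 * (1 + t) ^ 4 := key
      _ ≤ 1296 * t ^ 8 * ((3/2*t) ^ 4) := by nlinarith [pow_nonneg ht 8]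
      _ ≤ (27 * t ^ 4) ^ 3 := by nlinarith [pow_nonneg ht 12]
      _ ≤ _ := h4

lemma eta_rpow_le (s : ℝ) :
    |∫ t in (0:ℝ)..s, Real.sqrt (2 * W t)| ^ ((4:ℝ)/3) ≤ 300 + 6 * W s := by
  set x := |∫ t in (0:ℝ)..s, Real.sqrt (2 * W t)| with hx
  have hx0 : 0 ≤ x := abs_nonneg _
  have hy0 : (0:ℝ) ≤ 300 + 6 * W s := by nlinarith [W_nonneg s]
  have h4 : x ^ (4:ℕ) ≤ (300 + 6 * W s) ^ (3:ℕ) := by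
    have h1 : x ≤ 6 * |s| ^ 2 + 6 * |s| ^ 3 := by
      have := eta_abs_le s
      rw [← sq_abs s] at this
      linarith
    calc x ^ 4 ≤ (6 * |s| ^ 2 + 6 * |s| ^ 3) ^ 4 := pow_le_pow_left₀ hx0 h1 4
      _ ≤ (300 + 108 * |s| ^ 2 * (1 - |s|) ^ 2) ^ 3 := poly_ineq (abs_nonneg s)
      _ ≤ (300 + 6 * W s) ^ 3 := pow_le_pow_left₀ (by nlinarith [sq_nonneg (1 - |s|), sq_nonneg s]) (by nlinarith [W_ge_abs s]) 3
  calc x ^ ((4:ℝ)/3) = (x ^ (4:ℕ)) ^ ((1:ℝ)/3) := by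
        rw [← Real.rpow_natCast x 4, ← Real.rpow_mul hx0]; norm_num
    _ ≤ ((300 + 6 * W s) ^ (3:ℕ)) ^ ((1:ℝ)/3) :=
        Real.rpow_le_rpow (by positivity) h4 (by norm_num)
    _ = 300 + 6 * W s := by
        rw [← Real.rpow_natCast (300 + 6 * W s) 3, ← Real.rpow_mul hy0]
        norm_num

lemma F_one : (∫ t in (0:ℝ)..1, Real.sqrt (2 * W t)) = 1 := by
  have h : ∀ t ∈ Set.uIcc (0:ℝ) 1, Real.sqrt (2 * W t) = 6 * t - 6 * t ^ 2 := by
    intro t ht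
    rw [Set.uIcc_of_le (by norm_num)] at ht
    rw [sqrt2W_eq, abs_of_nonneg (by nlinarith [ht.1, ht.2])]
    ring
  rw [intervalIntegral.integral_congr h]
  have : (∫ t in (0:ℝ)..1, (6 * t - 6 * t ^ 2)) =
      (∫ t in (0:ℝ)..1, 6 * t) - ∫ t in (0:ℝ)..1, 6 * t ^ 2 := by
    apply intervalIntegral.integral_sub <;>
      apply Continuous.intervalIntegrable (by continuity)
  rw [this, intervalIntegral.integral_const_mul, intervalIntegral.integral_const_mul,
    integral_id, integral_pow]
  norm_num

lemma F_cont : Continuous fun s => ∫ t in (0:ℝ)..s, Real.sqrt (2 * W t) :=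
  intervalIntegral.continuous_primitive (fun a b => contW.intervalIntegrable a b) 0

lemma amgm_s7 {ξ v w r : ℝ} (hξ : 0 < ξ) (hv : 0 ≤ v) (hw : 0 ≤ w) (hr : r ^ 2 = 2 * w) :
    r * v ≤ ξ / 2 * v ^ 2 + w / ξ := by
  have hw2 : w = r ^ 2 / 2 := by linarith
  rw [hw2, ← sub_nonneg]
  have key : ξ / 2 * v ^ 2 + r ^ 2 / 2 / ξ - r * v = (ξ * v - r) ^ 2 / (2 * ξ) := by
    field_simp
    ring
  rw [key]
  positivity

lemma rpow_add_le {x y p : ℝ} (hx : 0 ≤ x) (hy : 0 ≤ y) (hp : 0 ≤ p) :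
    (x + y) ^ p ≤ 2 ^ p * (x ^ p + y ^ p) := by
  have hmax : x + y ≤ 2 * max x y := by
    rcases max_cases x y with ⟨h1, h2⟩ | ⟨h1, h2⟩ <;> rw [h1] <;> linarith
  calc (x + y) ^ p ≤ (2 * max x y) ^ p :=
        Real.rpow_le_rpow (by linarith) hmax hp
    _ = 2 ^ p * (max x y) ^ p := Real.mul_rpow (by norm_num) (le_max_iff.2 (Or.inl hx))
    _ ≤ 2 ^ p * (x ^ p + y ^ p) := by
        have : (max x y) ^ p ≤ x ^ p + y ^ p := by
          rcases max_cases x y with ⟨h1, h2⟩ | ⟨h1, h2⟩ <;> rw [h1] <;>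
            [nlinarith [Real.rpow_nonneg hy p]; nlinarith [Real.rpow_nonneg hx p]]
        nlinarith [Real.rpow_natCast (2:ℝ) 0, Real.rpow_nonneg (show (0:ℝ) ≤ 2 by norm_num) p]

lemma trunc_ineq {x M q p : ℝ} (hx : 0 ≤ x) (hM : 0 < M) (hq : 0 < q) (hqp : q ≤ p) :
    x ^ q ≤ min x M ^ q + M ^ (q - p) * x ^ p := by
  rcases le_or_gt x M with h | h
  · rw [min_eq_left h]
    have : 0 ≤ M ^ (q - p) * x ^ p :=
      mul_nonneg (Real.rpow_nonneg hM.le _) (Real.rpow_nonneg hx _)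
    linarith
  · rw [min_eq_right h.le]
    have hx0 : 0 < x := hM.trans h
    have h1 : x ^ q = x ^ p * x ^ (q - p) := by
      rw [← Real.rpow_add hx0]; ring_nf
    have h2 : x ^ (q - p) ≤ M ^ (q - p) :=
      Real.rpow_le_rpow_of_nonpos hM h.le (by linarith)
    have h3 : 0 ≤ M ^ q := Real.rpow_nonneg hM.le _
    calc x ^ q = x ^ p * x ^ (q - p) := h1
      _ ≤ x ^ p * M ^ (q - p) := by
          have := Real.rpow_nonneg hx0.le p
          nlinarith
      _ = M ^ (q - p) * x ^ p := by ring
      _ ≤ M ^ q + M ^ (q - p) * x ^ p := by linarith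

theorem etaFn_bounds_and_convergence {n : ℕ} (hn : 2 ≤ n)
    (Ω : Set (EuclideanSpace ℝ (Fin n))) (hΩne : Ω.Nonempty) (hΩopen : IsOpen Ω)
    (hΩbdd : Bornology.IsBounded Ω)
    (G : Set (EuclideanSpace ℝ (Fin n))) (hGmeas : MeasurableSet G) (hGΩ : G ⊆ Ω)
    (hPfin : BddAbove (perimSet Ω G))
    (ξ : ℕ → ℝ) (hξpos : ∀ k, 0 < ξ k) (hξanti : StrictAnti ξ)
    (hξ0 : Tendsto ξ atTop (𝓝 0))
    (φ : ℕ → EuclideanSpace ℝ (Fin n) → ℝ)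
    (hφ : ∀ k, ContDiffOn ℝ 1 (φ k) Ω)
    (hgradInt : ∀ k, IntegrableOn (fun x => ‖gradient (φ k) x‖ ^ 2) Ω)
    (hWInt : ∀ k, IntegrableOn (fun x => W (φ k x)) Ω)
    (hae : ∀ᵐ x ∂(volume.restrict Ω),
      Tendsto (fun k => φ k x) atTop (𝓝 (G.indicator (fun _ => (1 : ℝ)) x)))
    (hsup : ∃ C : ℝ, ∀ k,
      (∫ x in Ω, (ξ k / 2 * ‖gradient (φ k) x‖ ^ 2 + W (φ k x) / ξ k)) ≤ C) :
    (⨆ k, eLpNorm (etaFn φ k) (ENNReal.ofReal (4 / 3)) (volume.restrict Ω)) < ⊤ ∧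
    (⨆ k, ∫⁻ x in Ω,
        ENNReal.ofReal (Real.sqrt (2 * W (φ k x)) * ‖gradient (φ k) x‖)) < ⊤ ∧
    (∀ᵐ x ∂(volume.restrict Ω),
      Tendsto (fun k => etaFn φ k x) atTop (𝓝 (G.indicator (fun _ => (1 : ℝ)) x))) ∧
    (∀ q : ℝ, 1 ≤ q → q < 4 / 3 →
      Tendsto (fun k => ∫ x in Ω, |etaFn φ k x - G.indicator (fun _ => (1 : ℝ)) x| ^ q)
        atTop (𝓝 0)) := by
  classical
  obtain ⟨C, hC⟩ := hsup
  set χ : EuclideanSpace ℝ (Fin n) → ℝ := G.indicator (fun _ => (1 : ℝ)) with hχdef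
  have hC0 : 0 ≤ C := by
    refine le_trans ?_ (hC 0)
    exact integral_nonneg fun x => add_nonneg
      (mul_nonneg (div_nonneg (hξpos 0).le (by norm_num)) (pow_nonneg (norm_nonneg _) 2))
      (div_nonneg (W_nonneg _) (hξpos 0).le)
  have hvol : volume Ω < ⊤ := hΩbdd.measure_lt_top
  have hWle : ∀ k, (∫ x in Ω, W (φ k x)) ≤ ξ 0 * C := by
    intro k
    have hint1 : IntegrableOn (fun x => ξ k / 2 * ‖gradient (φ k) x‖ ^ 2) Ω :=
      (hgradInt k).const_mul _
    have hint2 : IntegrableOn (fun x => W (φ k x) / ξ k) Ω := (hWInt k).div_const _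
    have hsplit := integral_add hint1 hint2
    have h1 : 0 ≤ ∫ x in Ω, ξ k / 2 * ‖gradient (φ k) x‖ ^ 2 :=
      integral_nonneg fun x =>
        mul_nonneg (div_nonneg (hξpos k).le (by norm_num)) (pow_nonneg (norm_nonneg _) 2)
    have h2 : (∫ x in Ω, W (φ k x) / ξ k) ≤ C := by
      have h3 := hC k; rw [hsplit] at h3; linarith
    rw [integral_div] at h2
    have hk : (∫ x in Ω, W (φ k x)) ≤ ξ k * C := by
      rw [div_le_iff₀ (hξpos k)] at h2
      linarith [mul_comm C (ξ k)]
    exact hk.trans (mul_le_mul_of_nonneg_right (hξanti.antitone (Nat.zero_le k)) hC0)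
  have hφae : ∀ k, AEMeasurable (φ k) (volume.restrict Ω) := fun k =>
    (hφ k).continuousOn.aemeasurable hΩopen.measurableSet
  have hηmeas : ∀ k, AEStronglyMeasurable (etaFn φ k) (volume.restrict Ω) := fun k =>
    (F_cont.measurable.comp_aemeasurable (hφae k)).aestronglyMeasurable
  set B : ℝ := 300 * (volume Ω).toReal + 6 * (ξ 0 * C) with hBdef
  have hconst : IntegrableOn (fun _ : EuclideanSpace ℝ (Fin n) => (300:ℝ)) Ω :=
    integrableOn_const hvol.ne
  have key1 : ∀ k, (∫⁻ x in Ω, ENNReal.ofReal (|etaFn φ k x| ^ ((4:ℝ)/3)))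
      ≤ ENNReal.ofReal B := by
    intro k
    have hmono : (∫⁻ x in Ω, ENNReal.ofReal (|etaFn φ k x| ^ ((4:ℝ)/3)))
        ≤ ∫⁻ x in Ω, ENNReal.ofReal (300 + 6 * W (φ k x)) :=
      lintegral_mono fun x => ENNReal.ofReal_le_ofReal (eta_rpow_le (φ k x))
    refine hmono.trans ?_
    have hint : Integrable (fun x => 300 + 6 * W (φ k x)) (volume.restrict Ω) :=
      hconst.add ((hWInt k).const_mul 6)
    rw [← ofReal_integral_eq_lintegral_ofReal hint
      (Eventually.of_forall fun x => by simp only [Pi.zero_apply]; nlinarith [W_nonneg (φ k x)])]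
    apply ENNReal.ofReal_le_ofReal
    rw [integral_add hconst ((hWInt k).const_mul 6), integral_const,
      integral_const_mul, Measure.real, Measure.restrict_apply_univ]
    have h5 := hWle k
    have h6 : (0:ℝ) ≤ (volume Ω).toReal := ENNReal.toReal_nonneg
    simp only [smul_eq_mul, hBdef]
    nlinarith
  have hp0 : (ENNReal.ofReal (4/3) : ℝ≥0∞) ≠ 0 := by
    simp only [ne_eq, ENNReal.ofReal_eq_zero, not_le]
    norm_num
  have bullet1 : (⨆ k, eLpNorm (etaFn φ k) (ENNReal.ofReal (4/3)) (volume.restrict Ω)) < ⊤ := by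
    have hb : ∀ k, eLpNorm (etaFn φ k) (ENNReal.ofReal (4/3)) (volume.restrict Ω)
        ≤ (ENNReal.ofReal B) ^ ((3:ℝ)/4) := by
      intro k
      rw [eLpNorm_eq_lintegral_rpow_enorm_toReal hp0 ENNReal.ofReal_ne_top,
        ENNReal.toReal_ofReal (by norm_num : (0:ℝ) ≤ 4/3)]
      have heq : (fun x => ‖etaFn φ k x‖ₑ ^ ((4:ℝ)/3))
          = fun x => ENNReal.ofReal (|etaFn φ k x| ^ ((4:ℝ)/3)) := by
        funext x
        rw [show ‖etaFn φ k x‖ₑ = ENNReal.ofReal |etaFn φ k x| by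
          rw [← ofReal_norm_eq_enorm, Real.norm_eq_abs],
          ← ENNReal.ofReal_rpow_of_nonneg (abs_nonneg _) (by norm_num)]
      rw [heq]
      calc (∫⁻ x in Ω, ENNReal.ofReal (|etaFn φ k x| ^ ((4:ℝ)/3))) ^ (1/((4:ℝ)/3))
          ≤ (ENNReal.ofReal B) ^ (1/((4:ℝ)/3)) :=
            ENNReal.rpow_le_rpow (key1 k) (by norm_num)
        _ = (ENNReal.ofReal B) ^ ((3:ℝ)/4) := by norm_num
    exact lt_of_le_of_lt (iSup_le hb)
      (ENNReal.rpow_lt_top_of_nonneg (by norm_num) ENNReal.ofReal_ne_top)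
  have bullet2 : (⨆ k, ∫⁻ x in Ω,
      ENNReal.ofReal (Real.sqrt (2 * W (φ k x)) * ‖gradient (φ k) x‖)) < ⊤ := by
    refine lt_of_le_of_lt (iSup_le fun k => ?_) (show ENNReal.ofReal C < ⊤ from ENNReal.ofReal_lt_top)
    have hmono : (∫⁻ x in Ω,
        ENNReal.ofReal (Real.sqrt (2 * W (φ k x)) * ‖gradient (φ k) x‖))
        ≤ ∫⁻ x in Ω, ENNReal.ofReal
          (ξ k / 2 * ‖gradient (φ k) x‖ ^ 2 + W (φ k x) / ξ k) :=
      lintegral_mono fun x => ENNReal.ofReal_le_ofReal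
        (amgm_s7 (hξpos k) (norm_nonneg _) (W_nonneg _)
          (Real.sq_sqrt (by nlinarith [W_nonneg (φ k x)])))
    refine hmono.trans ?_
    have hint : Integrable (fun x => ξ k / 2 * ‖gradient (φ k) x‖ ^ 2 + W (φ k x) / ξ k)
        (volume.restrict Ω) := ((hgradInt k).const_mul _).add ((hWInt k).div_const _)
    rw [← ofReal_integral_eq_lintegral_ofReal hint
      (Eventually.of_forall fun x => by
        simp only [Pi.zero_apply]
        exact add_nonneg
          (mul_nonneg (div_nonneg (hξpos k).le (by norm_num)) (pow_nonneg (norm_nonneg _) 2))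
          (div_nonneg (W_nonneg _) (hξpos k).le))]
    exact ENNReal.ofReal_le_ofReal (hC k)
  have bullet3 : ∀ᵐ x ∂(volume.restrict Ω),
      Tendsto (fun k => etaFn φ k x) atTop (𝓝 (χ x)) := by
    filter_upwards [hae] with x hx
    have h := (F_cont.tendsto (χ x)).comp hx
    have hFχ : (∫ t in (0:ℝ)..(χ x), Real.sqrt (2 * W t)) = χ x := by
      by_cases hxG : x ∈ G
      · simp only [hχdef, Set.indicator_of_mem hxG, F_one]
      · simp [hχdef, Set.indicator_of_notMem hxG]
    rw [hFχ] at h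
    exact h
  refine ⟨bullet1, bullet2, bullet3, ?_⟩
  intro q hq1 hq43
  have hq0 : (0:ℝ) < q := lt_of_lt_of_le one_pos hq1
  set g : ℕ → EuclideanSpace ℝ (Fin n) → ℝ := fun k x => etaFn φ k x - χ x with hgdef
  have hχmeas : Measurable χ := measurable_const.indicator hGmeas
  have hgmeas : ∀ k, AEMeasurable (g k) (volume.restrict Ω) := fun k =>
    (hηmeas k).aemeasurable.sub hχmeas.aemeasurable
  have hgtend : ∀ᵐ x ∂(volume.restrict Ω), Tendsto (fun k => g k x) atTop (𝓝 0) := by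
    filter_upwards [bullet3] with x hx
    simpa [hgdef] using hx.sub_const (χ x)
  have hχle : ∀ x, |χ x| ≤ 1 := fun x => by
    by_cases hxG : x ∈ G <;>
      simp [hχdef, Set.indicator_of_mem, Set.indicator_of_notMem, hxG]
  set B2 : ℝ≥0∞ := ENNReal.ofReal (2 ^ ((4:ℝ)/3)) * (ENNReal.ofReal B + volume Ω) with hB2
  have hB2top : B2 ≠ ⊤ := by
    rw [hB2]
    exact ENNReal.mul_ne_top ENNReal.ofReal_ne_top
      (ENNReal.add_ne_top.2 ⟨ENNReal.ofReal_ne_top, hvol.ne⟩)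
  have key2 : ∀ k, (∫⁻ x in Ω, ENNReal.ofReal (|g k x| ^ ((4:ℝ)/3))) ≤ B2 := by
    intro k
    have h2nn : (0:ℝ) ≤ 2 ^ ((4:ℝ)/3) := Real.rpow_nonneg (by norm_num) _
    have hpt : ∀ x, ENNReal.ofReal (|g k x| ^ ((4:ℝ)/3)) ≤
        ENNReal.ofReal (2 ^ ((4:ℝ)/3)) * ENNReal.ofReal (|etaFn φ k x| ^ ((4:ℝ)/3))
          + ENNReal.ofReal (2 ^ ((4:ℝ)/3)) := by
      intro x
      have h1 : |g k x| ≤ |etaFn φ k x| + |χ x| := by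
        simpa [hgdef, sub_eq_add_neg] using abs_add_le (etaFn φ k x) (-χ x)
      have h2 : |g k x| ^ ((4:ℝ)/3) ≤
          2 ^ ((4:ℝ)/3) * (|etaFn φ k x| ^ ((4:ℝ)/3) + |χ x| ^ ((4:ℝ)/3)) :=
        (Real.rpow_le_rpow (abs_nonneg _) h1 (by norm_num)).trans
          (rpow_add_le (abs_nonneg _) (abs_nonneg _) (by norm_num))
      have h3 : |χ x| ^ ((4:ℝ)/3) ≤ 1 :=
        Real.rpow_le_one (abs_nonneg _) (hχle x) (by norm_num)
      have h4 : |g k x| ^ ((4:ℝ)/3) ≤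
          2 ^ ((4:ℝ)/3) * |etaFn φ k x| ^ ((4:ℝ)/3) + 2 ^ ((4:ℝ)/3) := by nlinarith
      calc ENNReal.ofReal (|g k x| ^ ((4:ℝ)/3))
          ≤ ENNReal.ofReal (2 ^ ((4:ℝ)/3) * |etaFn φ k x| ^ ((4:ℝ)/3) + 2 ^ ((4:ℝ)/3)) :=
            ENNReal.ofReal_le_ofReal h4
        _ = ENNReal.ofReal (2 ^ ((4:ℝ)/3) * |etaFn φ k x| ^ ((4:ℝ)/3))
            + ENNReal.ofReal (2 ^ ((4:ℝ)/3)) :=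
            ENNReal.ofReal_add (mul_nonneg h2nn (Real.rpow_nonneg (abs_nonneg _) _)) h2nn
        _ = _ := by rw [ENNReal.ofReal_mul h2nn]
    calc (∫⁻ x in Ω, ENNReal.ofReal (|g k x| ^ ((4:ℝ)/3)))
        ≤ ∫⁻ x in Ω, (ENNReal.ofReal (2 ^ ((4:ℝ)/3))
            * ENNReal.ofReal (|etaFn φ k x| ^ ((4:ℝ)/3)) + ENNReal.ofReal (2 ^ ((4:ℝ)/3))) :=
          lintegral_mono fun x => hpt x
      _ = ENNReal.ofReal (2 ^ ((4:ℝ)/3)) * (∫⁻ x in Ω, ENNReal.ofReal (|etaFn φ k x| ^ ((4:ℝ)/3)))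
          + ENNReal.ofReal (2 ^ ((4:ℝ)/3)) * volume Ω := by
          rw [lintegral_add_right' _ aemeasurable_const,
            lintegral_const_mul' _ _ ENNReal.ofReal_ne_top, lintegral_const,
            Measure.restrict_apply_univ]
      _ ≤ ENNReal.ofReal (2 ^ ((4:ℝ)/3)) * ENNReal.ofReal B
          + ENNReal.ofReal (2 ^ ((4:ℝ)/3)) * volume Ω :=
          add_le_add_left (mul_le_mul_right (key1 k) _) _
      _ = B2 := by rw [hB2, mul_add]
  have L : Tendsto (fun k => ∫⁻ x in Ω, ENNReal.ofReal (|g k x| ^ q)) atTop (𝓝 0) := by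
    rw [ENNReal.tendsto_atTop_zero]
    intro ε hε
    have hM_ex : ∃ M : ℕ, 1 ≤ (M:ℝ) ∧
        ENNReal.ofReal ((M:ℝ) ^ (q - 4/3)) * B2 < ε / 2 := by
      have h2 : Tendsto (fun x : ℝ => x ^ (q - 4/3)) atTop (𝓝 0) := by
        have h2' := tendsto_rpow_neg_atTop (y := 4/3 - q) (by linarith)
        simpa [neg_sub] using h2'
      have h1 : Tendsto (fun M : ℕ => ENNReal.ofReal ((M:ℝ) ^ (q - 4/3)) * B2)
          atTop (𝓝 0) := by
        have h3 := ENNReal.tendsto_ofReal (h2.comp tendsto_natCast_atTop_atTop)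
        simpa using ENNReal.Tendsto.mul_const h3 (Or.inr hB2top)
      have h4 := h1.eventually_lt_const (ENNReal.half_pos hε.ne')
      obtain ⟨M, hM⟩ := ((eventually_ge_atTop 1).and h4).exists
      exact ⟨M, by exact_mod_cast hM.1, hM.2⟩
    obtain ⟨M, hM1, hM2⟩ := hM_ex
    have hM0 : (0:ℝ) < M := by linarith
    have cont1 : Continuous fun r : ℝ => ENNReal.ofReal (min |r| (M:ℝ) ^ q) :=
      ENNReal.continuous_ofReal.comp ((Real.continuous_rpow_const hq0.le).comp
        (continuous_abs.min continuous_const))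
    have hDCT : Tendsto (fun k => ∫⁻ x in Ω, ENNReal.ofReal (min |g k x| (M:ℝ) ^ q))
        atTop (𝓝 0) := by
      have hd := tendsto_lintegral_of_dominated_convergence' (μ := volume.restrict Ω)
        (F := fun k x => ENNReal.ofReal (min |g k x| (M:ℝ) ^ q))
        (f := fun _ => 0) (bound := fun _ => ENNReal.ofReal ((M:ℝ) ^ q))
        (fun k => cont1.measurable.comp_aemeasurable (hgmeas k))
        (fun k => Eventually.of_forall fun x => ENNReal.ofReal_le_ofReal
          (Real.rpow_le_rpow (le_min (abs_nonneg _) hM0.le) (min_le_right _ _) hq0.le))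
        (by rw [lintegral_const, Measure.restrict_apply_univ]
            exact ENNReal.mul_ne_top ENNReal.ofReal_ne_top hvol.ne)
        (hgtend.mono fun x hx => by
          have h5 := (cont1.tendsto 0).comp hx
          simpa [Function.comp_def, abs_zero, min_eq_left hM0.le, Real.zero_rpow hq0.ne'] using h5)
      simpa using hd
    have hbound : ∀ k, (∫⁻ x in Ω, ENNReal.ofReal (|g k x| ^ q)) ≤
        (∫⁻ x in Ω, ENNReal.ofReal (min |g k x| (M:ℝ) ^ q))
          + ENNReal.ofReal ((M:ℝ) ^ (q - 4/3)) * B2 := by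
      intro k
      have hpt : ∀ x, ENNReal.ofReal (|g k x| ^ q) ≤
          ENNReal.ofReal (min |g k x| (M:ℝ) ^ q)
            + ENNReal.ofReal ((M:ℝ) ^ (q - 4/3)) * ENNReal.ofReal (|g k x| ^ ((4:ℝ)/3)) := by
        intro x
        have ht := trunc_ineq (abs_nonneg (g k x)) hM0 hq0 (le_of_lt hq43)
        calc ENNReal.ofReal (|g k x| ^ q)
            ≤ ENNReal.ofReal (min |g k x| (M:ℝ) ^ q
                + (M:ℝ) ^ (q - 4/3) * |g k x| ^ ((4:ℝ)/3)) := ENNReal.ofReal_le_ofReal ht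
          _ = _ := by
              rw [ENNReal.ofReal_add (Real.rpow_nonneg (le_min (abs_nonneg _) hM0.le) _)
                (mul_nonneg (Real.rpow_nonneg hM0.le _) (Real.rpow_nonneg (abs_nonneg _) _)),
                ENNReal.ofReal_mul (Real.rpow_nonneg hM0.le _)]
      calc (∫⁻ x in Ω, ENNReal.ofReal (|g k x| ^ q))
          ≤ ∫⁻ x in Ω, (ENNReal.ofReal (min |g k x| (M:ℝ) ^ q)
              + ENNReal.ofReal ((M:ℝ) ^ (q - 4/3)) * ENNReal.ofReal (|g k x| ^ ((4:ℝ)/3))) :=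
            lintegral_mono fun x => hpt x
        _ = (∫⁻ x in Ω, ENNReal.ofReal (min |g k x| (M:ℝ) ^ q))
            + ∫⁻ x in Ω, ENNReal.ofReal ((M:ℝ) ^ (q - 4/3))
              * ENNReal.ofReal (|g k x| ^ ((4:ℝ)/3)) :=
            lintegral_add_left' (cont1.measurable.comp_aemeasurable (hgmeas k)) _
        _ ≤ _ := by
            rw [lintegral_const_mul' _ _ ENNReal.ofReal_ne_top]
            exact add_le_add_right (mul_le_mul_right (key2 k) _) _
    obtain ⟨N, hN⟩ := (hDCT.eventually_lt_const (ENNReal.half_pos hε.ne')).exists_forall_of_atTop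
    refine ⟨N, fun k hk => ?_⟩
    calc (∫⁻ x in Ω, ENNReal.ofReal (|g k x| ^ q))
        ≤ (∫⁻ x in Ω, ENNReal.ofReal (min |g k x| (M:ℝ) ^ q))
          + ENNReal.ofReal ((M:ℝ) ^ (q - 4/3)) * B2 := hbound k
      _ ≤ ε / 2 + ε / 2 := add_le_add (hN k hk).le hM2.le
      _ = ε := ENNReal.add_halves ε
  have heq : ∀ k, (∫ x in Ω, |g k x| ^ q)
      = (∫⁻ x in Ω, ENNReal.ofReal (|g k x| ^ q)).toReal := fun k =>
    integral_eq_lintegral_of_nonneg_ae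
      (Eventually.of_forall fun x => Real.rpow_nonneg (abs_nonneg _) q)
      ((((Real.continuous_rpow_const hq0.le).comp continuous_abs).measurable.comp_aemeasurable
        (hgmeas k)).aestronglyMeasurable)
  have hfin := (ENNReal.tendsto_toReal (by simp : (0:ℝ≥0∞) ≠ ⊤)).comp L
  rw [ENNReal.toReal_zero] at hfin
  exact hfin.congr fun k => (heq k).symm
end
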